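/- Let A be a Banach algebra, X a Banach A-bimodule, δ ≥ 0, p, q ≥ 0 with 0 < p + q < 3, and f : A → X with f(0) = 0 satisfy ‖f(2a+b) + f(2a−b) − 2f(a+b) − 2f(a−b) − 12f(a)‖ ≤ δ‖a‖^p‖b‖^q and ‖f(ab) − f(a)·b³ − a³·f(b)‖ ≤ δ‖a‖^p‖b‖^q for all a, b ∈ A. Then f itself satisfies the exact cubic functional equation and f(ab) = f(a)·b³ + a³·f(b) for all a, b ∈ A. -/

import Mathlib

open Filter

private lemma aux_rpow_lt (s : ℝ) (h : s < 3) : (2:ℝ)^s < 8 := by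
  have h8 : (8:ℝ) = (2:ℝ)^(3:ℝ) := by
    rw [show (3:ℝ) = ((3:ℕ):ℝ) by norm_num, Real.rpow_natCast]; norm_num
  rw [h8]
  exact Real.rpow_lt_rpow_of_exponent_lt (by norm_num) h

private lemma aux_pow_rpow (s : ℝ) (n : ℕ) : ((2:ℝ)^n)^s = ((2:ℝ)^s)^n := by
  rw [← Real.rpow_natCast (2:ℝ) n, ← Real.rpow_natCast ((2:ℝ)^s) n,
    ← Real.rpow_mul (by norm_num), ← Real.rpow_mul (by norm_num), mul_comm]

private lemma aux_squeeze {X : Type*} [NormedAddCommGroup X] (u : ℕ → X) (C r : ℝ)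
    (hr0 : 0 ≤ r) (hr1 : r < 1) (h : ∀ n, ‖u n‖ ≤ C * r ^ n) :
    Tendsto u atTop (nhds 0) := by
  have := (tendsto_pow_atTop_nhds_zero_of_lt_one hr0 hr1).const_mul C
  rw [mul_zero] at this
  exact squeeze_zero_norm h this

private lemma aux_op_nsmul {A : Type*} [NormedRing A] (n : ℕ) (b : A) :
    MulOpposite.op (n • b) = n • MulOpposite.op b := by
  induction n with
  | zero => simp
  | succ k ih => rw [succ_nsmul, succ_nsmul, MulOpposite.op_add, ih]

theorem cubic_derivation_superstability {A X : Type*}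
    [NormedRing A] [NormedAlgebra ℂ A] [CompleteSpace A]
    [NormedAddCommGroup X] [NormedSpace ℂ X] [CompleteSpace X]
    [Module A X] [Module Aᵐᵒᵖ X] [SMulCommClass A Aᵐᵒᵖ X]
    [IsBoundedSMul A X] [IsBoundedSMul Aᵐᵒᵖ X]
    (δ p q : ℝ) (hδ : 0 ≤ δ) (hp : 0 ≤ p) (hq : 0 ≤ q)
    (hpq0 : 0 < p + q) (hpq3 : p + q < 3)
    (f : A → X) (hf0 : f 0 = 0)
    (hf1 : ∀ a b : A,
      ‖f ((2 : ℂ) • a + b) + f ((2 : ℂ) • a - b) - (2 : ℂ) • f (a + b)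
        - (2 : ℂ) • f (a - b) - (12 : ℂ) • f a‖ ≤ δ * (‖a‖ ^ p * ‖b‖ ^ q))
    (hf2 : ∀ a b : A,
      ‖f (a * b) - MulOpposite.op (b * b * b) • f a - (a * a * a) • f b‖
        ≤ δ * (‖a‖ ^ p * ‖b‖ ^ q)) :
    (∀ a b : A, f ((2 : ℂ) • a + b) + f ((2 : ℂ) • a - b)
      = (2 : ℂ) • f (a + b) + (2 : ℂ) • f (a - b) + (12 : ℂ) • f a) ∧
    (∀ a b : A, f (a * b) = MulOpposite.op (b * b * b) • f a + (a * a * a) • f b) := by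
  -- basic exponent facts
  have hp3 : p < 3 := lt_of_le_of_lt (le_add_of_nonneg_right hq) hpq3
  have hq3 : q < 3 := lt_of_le_of_lt (le_add_of_nonneg_left hp) hpq3
  have hr1lt : (2:ℝ)^p / 8 < 1 := by
    rw [div_lt_one (by norm_num)]; exact aux_rpow_lt p hp3
  have hr1nn : 0 ≤ (2:ℝ)^p / 8 := by positivity
  have hr2lt : (2:ℝ)^q / 8 < 1 := by
    rw [div_lt_one (by norm_num)]; exact aux_rpow_lt q hq3
  have hr2nn : 0 ≤ (2:ℝ)^q / 8 := by positivity
  have hr3lt : (2:ℝ)^(p+q) / 8 < 1 := by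
    rw [div_lt_one (by norm_num)]; exact aux_rpow_lt _ hpq3
  have hr3nn : 0 ≤ (2:ℝ)^(p+q) / 8 := by positivity
  have hr4lt : (2:ℝ)^(p+q) / 64 < 1 := by
    rw [div_lt_one (by norm_num)]
    exact lt_trans (aux_rpow_lt _ hpq3) (by norm_num)
  have hr4nn : 0 ≤ (2:ℝ)^(p+q) / 64 := by positivity
  -- norm of scaled elements
  have hnorm : ∀ (n : ℕ) (a : A), ‖(2^n : ℕ) • a‖ = 2^n * ‖a‖ := by
    intro n a
    rw [← Nat.cast_smul_eq_nsmul ℝ, norm_smul]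
    simp [abs_of_nonneg]
  -- norm of the complex scalars
  have hcnorm : ∀ n : ℕ, ‖((8:ℂ)⁻¹)^n‖ = ((8:ℝ)⁻¹)^n := by intro n; simp
  -- scalar commutation lemma: the action of anything ℕ-linear commutes with (8⁻¹)^n •
  have hcomm : ∀ (n : ℕ) (x : X) (T : X → X), (∀ (k : ℕ) (y : X), T (k • y) = k • T y) →
      T (((8:ℂ)⁻¹)^n • x) = ((8:ℂ)⁻¹)^n • T x := by
    intro n x T hT
    have h8 : ((8:ℂ)^n) ≠ 0 := pow_ne_zero _ (by norm_num)
    have key : ∀ y : X, (8:ℂ)^n • (((8:ℂ)⁻¹)^n • y) = y := by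
      intro y
      rw [smul_smul, ← mul_pow, mul_inv_cancel₀ (by norm_num : (8:ℂ) ≠ 0), one_pow, one_smul]
    apply smul_right_injective X h8
    calc (8:ℂ)^n • T (((8:ℂ)⁻¹)^n • x)
        = ((8^n : ℕ) : ℂ) • T (((8:ℂ)⁻¹)^n • x) := by push_cast; ring_nf
      _ = (8^n : ℕ) • T (((8:ℂ)⁻¹)^n • x) := Nat.cast_smul_eq_nsmul ℂ _ _
      _ = T ((8^n : ℕ) • (((8:ℂ)⁻¹)^n • x)) := (hT _ _).symm
      _ = T (((8^n : ℕ) : ℂ) • (((8:ℂ)⁻¹)^n • x)) := by rw [Nat.cast_smul_eq_nsmul]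
      _ = T x := by push_cast; rw [key]
      _ = (8:ℂ)^n • (((8:ℂ)⁻¹)^n • T x) := (key _).symm
  -- cube of scaled element
  have hcube : ∀ (n : ℕ) (a : A),
      ((2^n : ℕ) • a) * ((2^n : ℕ) • a) * ((2^n : ℕ) • a) = (8^n : ℕ) • (a * a * a) := by
    intro n a
    simp only [smul_mul_assoc, mul_smul_comm, smul_smul]
    congr 1
    rw [← mul_pow, ← mul_pow]
    norm_num
  -- the controlling bound rewrite
  have hbound : ∀ (n : ℕ) (a : A), δ * (‖(2^n : ℕ) • a‖^p) = (δ * ‖a‖^p) * ((2:ℝ)^p)^n := by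
    intro n a
    rw [hnorm, Real.mul_rpow (by positivity) (norm_nonneg a), aux_pow_rpow]
    ring
  -- recursion: ‖f (2•a) - 8•f a‖ ≤ δ/2 * ‖a‖^p
  have hrec : ∀ a : A, ‖f (2 • a) - (8:ℂ) • f a‖ ≤ δ/2 * ‖a‖^p := by
    intro a
    have h := hf1 a 0
    simp only [add_zero, sub_zero] at h
    have h2a : (2:ℂ) • a = 2 • a := by
      rw [show (2:ℂ) = ((2:ℕ):ℂ) by norm_num, Nat.cast_smul_eq_nsmul]
    have hL : f ((2:ℂ) • a) + f ((2:ℂ) • a) - (2:ℂ) • f a - (2:ℂ) • f a - (12:ℂ) • f a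
        = (2:ℂ) • (f (2 • a) - (8:ℂ) • f a) := by
      rw [← h2a]; module
    rw [hL, norm_smul] at h
    simp only [Complex.norm_ofNat] at h
    have h0q : ‖(0:A)‖^q ≤ 1 := by
      rw [norm_zero]
      exact Real.rpow_le_one (le_refl 0) (by norm_num) hq
    have hap : (0:ℝ) ≤ ‖a‖^p := Real.rpow_nonneg (norm_nonneg a) p
    nlinarith [mul_nonneg (mul_nonneg hδ hap) (sub_nonneg.2 h0q)]
  -- the approximating sequence converges
  have hex : ∀ a : A, ∃ x : X,
      Tendsto (fun n : ℕ => ((8:ℂ)⁻¹)^n • f ((2^n : ℕ) • a)) atTop (nhds x) := by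
    intro a
    apply cauchySeq_tendsto_of_complete
    apply cauchySeq_of_le_geometric ((2:ℝ)^p/8) (δ/16 * ‖a‖^p) hr1lt
    intro n
    rw [dist_eq_norm]
    have hstep : ((8:ℂ)⁻¹)^n • f ((2^n : ℕ) • a) - ((8:ℂ)⁻¹)^(n+1) • f ((2^(n+1) : ℕ) • a)
        = ((8:ℂ)⁻¹)^(n+1) • ((8:ℂ) • f ((2^n : ℕ) • a) - f (2 • ((2^n : ℕ) • a))) := by
      have harg : (2^(n+1) : ℕ) • a = 2 • ((2^n : ℕ) • a) := by
        rw [← mul_smul]; congr 1; ring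
      have hsc : ((8:ℂ)⁻¹)^(n+1) * 8 = ((8:ℂ)⁻¹)^n := by
        rw [pow_succ, mul_assoc, inv_mul_cancel₀ (by norm_num : (8:ℂ) ≠ 0), mul_one]
      rw [harg, smul_sub,
        show ((8:ℂ)⁻¹)^(n+1) • (8:ℂ) • f ((2^n : ℕ) • a) = ((8:ℂ)⁻¹)^n • f ((2^n : ℕ) • a)
          from by rw [smul_smul, hsc]]
    rw [hstep, norm_smul, hcnorm, norm_sub_rev]
    calc ((8:ℝ)⁻¹)^(n+1) * ‖f (2 • ((2^n : ℕ) • a)) - (8:ℂ) • f ((2^n : ℕ) • a)‖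
        ≤ ((8:ℝ)⁻¹)^(n+1) * (δ/2 * ‖(2^n : ℕ) • a‖^p) := by
          apply mul_le_mul_of_nonneg_left (hrec _) (by positivity)
      _ = δ/16 * ‖a‖^p * ((2:ℝ)^p/8)^n := by
          rw [hnorm, Real.mul_rpow (by positivity) (norm_nonneg a), aux_pow_rpow,
            div_pow, pow_succ]
          field_simp
          have h8 : ((1:ℝ)/8)^n * (8:ℝ)^n = 1 := by rw [← mul_pow]; norm_num
          linear_combination (δ * ‖a‖^p * 16) * h8
  choose g hg using hex
  -- key limit 1 : g (a*b) = op (b³) • g a + a³ • f b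
  have key1 : ∀ a b : A, g (a * b) = MulOpposite.op (b*b*b) • g a + (a*a*a) • f b := by
    intro a b
    have hT : Tendsto (fun n : ℕ => ((8:ℂ)⁻¹)^n • f ((2^n : ℕ) • (a*b))
        - MulOpposite.op (b*b*b) • (((8:ℂ)⁻¹)^n • f ((2^n : ℕ) • a))
        - (a*a*a) • f b) atTop
        (nhds (g (a*b) - MulOpposite.op (b*b*b) • g a - (a*a*a) • f b)) :=
      ((hg (a*b)).sub ((hg a).const_smul _)).sub tendsto_const_nhds
    have hZ : Tendsto (fun n : ℕ => ((8:ℂ)⁻¹)^n • f ((2^n : ℕ) • (a*b))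
        - MulOpposite.op (b*b*b) • (((8:ℂ)⁻¹)^n • f ((2^n : ℕ) • a))
        - (a*a*a) • f b) atTop (nhds 0) := by
      apply aux_squeeze _ (δ * (‖a‖^p * ‖b‖^q)) ((2:ℝ)^p/8) hr1nn hr1lt
      intro n
      have hrw : ((8:ℂ)⁻¹)^n • f ((2^n : ℕ) • (a*b))
          - MulOpposite.op (b*b*b) • (((8:ℂ)⁻¹)^n • f ((2^n : ℕ) • a))
          - (a*a*a) • f b
          = ((8:ℂ)⁻¹)^n • (f (((2^n : ℕ) • a) * b)
            - MulOpposite.op (b*b*b) • f ((2^n : ℕ) • a)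
            - (((2^n : ℕ) • a) * ((2^n : ℕ) • a) * ((2^n : ℕ) • a)) • f b) := by
        rw [smul_sub, smul_sub, smul_mul_assoc]
        congr 1
        · congr 1
          exact hcomm n (f ((2^n : ℕ) • a)) (fun y => MulOpposite.op (b*b*b) • y)
            (fun k y => smul_comm _ k y)
        · rw [hcube, smul_assoc, ← Nat.cast_smul_eq_nsmul ℂ (8^n) ((a*a*a) • f b),
            smul_smul]
          push_cast
          rw [← mul_pow, inv_mul_cancel₀ (by norm_num : (8:ℂ) ≠ 0), one_pow, one_smul]
      rw [hrw, norm_smul, hcnorm]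
      calc ((8:ℝ)⁻¹)^n * ‖f (((2^n : ℕ) • a) * b)
            - MulOpposite.op (b*b*b) • f ((2^n : ℕ) • a)
            - (((2^n : ℕ) • a) * ((2^n : ℕ) • a) * ((2^n : ℕ) • a)) • f b‖
          ≤ ((8:ℝ)⁻¹)^n * (δ * (‖(2^n : ℕ) • a‖^p * ‖b‖^q)) := by
            apply mul_le_mul_of_nonneg_left (hf2 _ b) (by positivity)
        _ = δ * (‖a‖^p * ‖b‖^q) * ((2:ℝ)^p/8)^n := by
            rw [hnorm, Real.mul_rpow (by positivity) (norm_nonneg a), aux_pow_rpow,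
              div_pow]
            field_simp
            have h8 : ((1:ℝ)/8)^n * (8:ℝ)^n = 1 := by rw [← mul_pow]; norm_num
            linear_combination (δ * ‖a‖^p * ‖b‖^q) * h8
    have := tendsto_nhds_unique hT hZ
    rw [sub_eq_zero] at this
    rw [sub_eq_iff_eq_add] at this
    rw [this]
    abel
  -- key limit 2 : g (a*b) = op (b³) • f a + a³ • g b
  have key2 : ∀ a b : A, g (a * b) = MulOpposite.op (b*b*b) • f a + (a*a*a) • g b := by
    intro a b
    have hT : Tendsto (fun n : ℕ => ((8:ℂ)⁻¹)^n • f ((2^n : ℕ) • (a*b))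
        - MulOpposite.op (b*b*b) • f a
        - (a*a*a) • (((8:ℂ)⁻¹)^n • f ((2^n : ℕ) • b))) atTop
        (nhds (g (a*b) - MulOpposite.op (b*b*b) • f a - (a*a*a) • g b)) :=
      ((hg (a*b)).sub tendsto_const_nhds).sub ((hg b).const_smul _)
    have hZ : Tendsto (fun n : ℕ => ((8:ℂ)⁻¹)^n • f ((2^n : ℕ) • (a*b))
        - MulOpposite.op (b*b*b) • f a
        - (a*a*a) • (((8:ℂ)⁻¹)^n • f ((2^n : ℕ) • b))) atTop (nhds 0) := by
      apply aux_squeeze _ (δ * (‖a‖^p * ‖b‖^q)) ((2:ℝ)^q/8) hr2nn hr2lt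
      intro n
      have hrw : ((8:ℂ)⁻¹)^n • f ((2^n : ℕ) • (a*b))
          - MulOpposite.op (b*b*b) • f a
          - (a*a*a) • (((8:ℂ)⁻¹)^n • f ((2^n : ℕ) • b))
          = ((8:ℂ)⁻¹)^n • (f (a * ((2^n : ℕ) • b))
            - MulOpposite.op (((2^n : ℕ) • b) * ((2^n : ℕ) • b) * ((2^n : ℕ) • b)) • f a
            - (a*a*a) • f ((2^n : ℕ) • b)) := by
        rw [smul_sub, smul_sub, mul_smul_comm]
        congr 1
        · congr 1
          rw [hcube, aux_op_nsmul, smul_assoc,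
            ← Nat.cast_smul_eq_nsmul ℂ (8^n) (MulOpposite.op (b*b*b) • f a), smul_smul]
          push_cast
          rw [← mul_pow, inv_mul_cancel₀ (by norm_num : (8:ℂ) ≠ 0), one_pow, one_smul]
        · exact hcomm n (f ((2^n : ℕ) • b)) (fun y => (a*a*a) • y)
            (fun k y => smul_comm _ k y)
      rw [hrw, norm_smul, hcnorm]
      calc ((8:ℝ)⁻¹)^n * ‖f (a * ((2^n : ℕ) • b))
            - MulOpposite.op (((2^n : ℕ) • b) * ((2^n : ℕ) • b) * ((2^n : ℕ) • b)) • f a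
            - (a*a*a) • f ((2^n : ℕ) • b)‖
          ≤ ((8:ℝ)⁻¹)^n * (δ * (‖a‖^p * ‖(2^n : ℕ) • b‖^q)) := by
            apply mul_le_mul_of_nonneg_left (hf2 a _) (by positivity)
        _ = δ * (‖a‖^p * ‖b‖^q) * ((2:ℝ)^q/8)^n := by
            rw [hnorm, Real.mul_rpow (by positivity) (norm_nonneg b), aux_pow_rpow,
              div_pow]
            field_simp
            have h8 : ((1:ℝ)/8)^n * (8:ℝ)^n = 1 := by rw [← mul_pow]; norm_num
            linear_combination (δ * ‖a‖^p * ‖b‖^q) * h8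
    have := tendsto_nhds_unique hT hZ
    rw [sub_eq_zero] at this
    rw [sub_eq_iff_eq_add] at this
    rw [this]
    abel
  -- key limit 3 : g (a*b) = op (b³) • g a + a³ • g b
  have key3 : ∀ a b : A, g (a * b) = MulOpposite.op (b*b*b) • g a + (a*a*a) • g b := by
    intro a b
    have hsub : Tendsto (fun n : ℕ => ((8:ℂ)⁻¹)^(2*n) • f ((2^(2*n) : ℕ) • (a*b)))
        atTop (nhds (g (a*b))) :=
      (hg (a*b)).comp (tendsto_atTop_mono (fun n => Nat.le_mul_of_pos_left n (by norm_num)) tendsto_id)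
    have hT : Tendsto (fun n : ℕ => ((8:ℂ)⁻¹)^(2*n) • f ((2^(2*n) : ℕ) • (a*b))
        - MulOpposite.op (b*b*b) • (((8:ℂ)⁻¹)^n • f ((2^n : ℕ) • a))
        - (a*a*a) • (((8:ℂ)⁻¹)^n • f ((2^n : ℕ) • b))) atTop
        (nhds (g (a*b) - MulOpposite.op (b*b*b) • g a - (a*a*a) • g b)) :=
      (hsub.sub ((hg a).const_smul _)).sub ((hg b).const_smul _)
    have hZ : Tendsto (fun n : ℕ => ((8:ℂ)⁻¹)^(2*n) • f ((2^(2*n) : ℕ) • (a*b))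
        - MulOpposite.op (b*b*b) • (((8:ℂ)⁻¹)^n • f ((2^n : ℕ) • a))
        - (a*a*a) • (((8:ℂ)⁻¹)^n • f ((2^n : ℕ) • b))) atTop (nhds 0) := by
      apply aux_squeeze _ (δ * (‖a‖^p * ‖b‖^q)) ((2:ℝ)^(p+q)/64) hr4nn hr4lt
      intro n
      have hsc : ((8:ℂ)⁻¹)^(2*n) * (8:ℂ)^n = ((8:ℂ)⁻¹)^n := by
        rw [two_mul, pow_add, mul_assoc, inv_pow, inv_mul_cancel₀
          (pow_ne_zero _ (by norm_num : (8:ℂ) ≠ 0)), mul_one]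
      have hrw : ((8:ℂ)⁻¹)^(2*n) • f ((2^(2*n) : ℕ) • (a*b))
          - MulOpposite.op (b*b*b) • (((8:ℂ)⁻¹)^n • f ((2^n : ℕ) • a))
          - (a*a*a) • (((8:ℂ)⁻¹)^n • f ((2^n : ℕ) • b))
          = ((8:ℂ)⁻¹)^(2*n) • (f (((2^n : ℕ) • a) * ((2^n : ℕ) • b))
            - MulOpposite.op (((2^n : ℕ) • b) * ((2^n : ℕ) • b) * ((2^n : ℕ) • b)) • f ((2^n : ℕ) • a)
            - (((2^n : ℕ) • a) * ((2^n : ℕ) • a) * ((2^n : ℕ) • a)) • f ((2^n : ℕ) • b)) := by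
        have harg : ((2^n : ℕ) • a) * ((2^n : ℕ) • b) = (2^(2*n) : ℕ) • (a * b) := by
          rw [smul_mul_assoc, mul_smul_comm, smul_smul]
          congr 1
          rw [← pow_add, two_mul]
        rw [harg, smul_sub, smul_sub]
        congr 1
        · congr 1
          rw [hcube, aux_op_nsmul, smul_assoc,
            ← Nat.cast_smul_eq_nsmul ℂ (8^n) (MulOpposite.op (b*b*b) • f ((2^n : ℕ) • a)),
            smul_smul]
          push_cast
          rw [hsc]
          exact hcomm n (f ((2^n : ℕ) • a)) (fun y => MulOpposite.op (b*b*b) • y)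
            (fun k y => smul_comm _ k y)
        · rw [hcube, smul_assoc,
            ← Nat.cast_smul_eq_nsmul ℂ (8^n) ((a*a*a) • f ((2^n : ℕ) • b)), smul_smul]
          push_cast
          rw [hsc]
          exact hcomm n (f ((2^n : ℕ) • b)) (fun y => (a*a*a) • y)
            (fun k y => smul_comm _ k y)
      rw [hrw, norm_smul, hcnorm]
      calc ((8:ℝ)⁻¹)^(2*n) * ‖f (((2^n : ℕ) • a) * ((2^n : ℕ) • b))
            - MulOpposite.op (((2^n : ℕ) • b) * ((2^n : ℕ) • b) * ((2^n : ℕ) • b)) • f ((2^n : ℕ) • a)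
            - (((2^n : ℕ) • a) * ((2^n : ℕ) • a) * ((2^n : ℕ) • a)) • f ((2^n : ℕ) • b)‖
          ≤ ((8:ℝ)⁻¹)^(2*n) * (δ * (‖(2^n : ℕ) • a‖^p * ‖(2^n : ℕ) • b‖^q)) := by
            apply mul_le_mul_of_nonneg_left (hf2 _ _) (by positivity)
        _ = δ * (‖a‖^p * ‖b‖^q) * ((2:ℝ)^(p+q)/64)^n := by
            rw [hnorm, hnorm, Real.mul_rpow (by positivity) (norm_nonneg a),
              Real.mul_rpow (by positivity) (norm_nonneg b), aux_pow_rpow, aux_pow_rpow,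
              div_pow, Real.rpow_add (by norm_num : (0:ℝ) < 2), mul_pow,
              show ((8:ℝ)⁻¹)^(2*n) = ((64:ℝ)⁻¹)^n from by rw [pow_mul]; norm_num]
            field_simp
            have h8 : ((1:ℝ)/64)^n * (64:ℝ)^n = 1 := by rw [← mul_pow]; norm_num
            linear_combination (δ * ‖a‖^p * ‖b‖^q) * h8
    have := tendsto_nhds_unique hT hZ
    rw [sub_eq_zero] at this
    rw [sub_eq_iff_eq_add] at this
    rw [this]
    abel
  -- superstability: f = g
  have hfg : ∀ b : A, f b = g b := by
    intro b
    have h1 := key1 1 b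
    have h3 := key3 1 b
    rw [h1] at h3
    have := add_left_cancel h3
    simpa using this
  refine ⟨?_, ?_⟩
  · -- cubic equation
    intro a b
    have hT : Tendsto (fun n : ℕ => ((8:ℂ)⁻¹)^n • f ((2^n : ℕ) • ((2:ℂ) • a + b))
        + ((8:ℂ)⁻¹)^n • f ((2^n : ℕ) • ((2:ℂ) • a - b))
        - (2:ℂ) • (((8:ℂ)⁻¹)^n • f ((2^n : ℕ) • (a + b)))
        - (2:ℂ) • (((8:ℂ)⁻¹)^n • f ((2^n : ℕ) • (a - b)))
        - (12:ℂ) • (((8:ℂ)⁻¹)^n • f ((2^n : ℕ) • a))) atTop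
        (nhds (g ((2:ℂ) • a + b) + g ((2:ℂ) • a - b) - (2:ℂ) • g (a + b)
          - (2:ℂ) • g (a - b) - (12:ℂ) • g a)) :=
      ((((hg _).add (hg _)).sub ((hg _).const_smul _)).sub
        ((hg _).const_smul _)).sub ((hg _).const_smul _)
    have hZ : Tendsto (fun n : ℕ => ((8:ℂ)⁻¹)^n • f ((2^n : ℕ) • ((2:ℂ) • a + b))
        + ((8:ℂ)⁻¹)^n • f ((2^n : ℕ) • ((2:ℂ) • a - b))
        - (2:ℂ) • (((8:ℂ)⁻¹)^n • f ((2^n : ℕ) • (a + b)))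
        - (2:ℂ) • (((8:ℂ)⁻¹)^n • f ((2^n : ℕ) • (a - b)))
        - (12:ℂ) • (((8:ℂ)⁻¹)^n • f ((2^n : ℕ) • a))) atTop (nhds 0) := by
      apply aux_squeeze _ (δ * (‖a‖^p * ‖b‖^q)) ((2:ℝ)^(p+q)/8) hr3nn hr3lt
      intro n
      have ha1 : (2^n : ℕ) • ((2:ℂ) • a + b) = (2:ℂ) • ((2^n : ℕ) • a) + (2^n : ℕ) • b := by
        rw [smul_add, smul_comm]
      have ha2 : (2^n : ℕ) • ((2:ℂ) • a - b) = (2:ℂ) • ((2^n : ℕ) • a) - (2^n : ℕ) • b := by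
        rw [smul_sub, smul_comm]
      have ha3 : (2^n : ℕ) • (a + b) = (2^n : ℕ) • a + (2^n : ℕ) • b := smul_add _ _ _
      have ha4 : (2^n : ℕ) • (a - b) = (2^n : ℕ) • a - (2^n : ℕ) • b := smul_sub _ _ _
      have hrw : ((8:ℂ)⁻¹)^n • f ((2^n : ℕ) • ((2:ℂ) • a + b))
          + ((8:ℂ)⁻¹)^n • f ((2^n : ℕ) • ((2:ℂ) • a - b))
          - (2:ℂ) • (((8:ℂ)⁻¹)^n • f ((2^n : ℕ) • (a + b)))
          - (2:ℂ) • (((8:ℂ)⁻¹)^n • f ((2^n : ℕ) • (a - b)))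
          - (12:ℂ) • (((8:ℂ)⁻¹)^n • f ((2^n : ℕ) • a))
          = ((8:ℂ)⁻¹)^n • (f ((2:ℂ) • ((2^n : ℕ) • a) + (2^n : ℕ) • b)
            + f ((2:ℂ) • ((2^n : ℕ) • a) - (2^n : ℕ) • b)
            - (2:ℂ) • f ((2^n : ℕ) • a + (2^n : ℕ) • b)
            - (2:ℂ) • f ((2^n : ℕ) • a - (2^n : ℕ) • b)
            - (12:ℂ) • f ((2^n : ℕ) • a)) := by
        rw [ha1, ha2, ha3, ha4]
        module
      rw [hrw, norm_smul, hcnorm]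
      calc ((8:ℝ)⁻¹)^n * ‖f ((2:ℂ) • ((2^n : ℕ) • a) + (2^n : ℕ) • b)
            + f ((2:ℂ) • ((2^n : ℕ) • a) - (2^n : ℕ) • b)
            - (2:ℂ) • f ((2^n : ℕ) • a + (2^n : ℕ) • b)
            - (2:ℂ) • f ((2^n : ℕ) • a - (2^n : ℕ) • b)
            - (12:ℂ) • f ((2^n : ℕ) • a)‖
          ≤ ((8:ℝ)⁻¹)^n * (δ * (‖(2^n : ℕ) • a‖^p * ‖(2^n : ℕ) • b‖^q)) := by
            apply mul_le_mul_of_nonneg_left (hf1 _ _) (by positivity)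
        _ = δ * (‖a‖^p * ‖b‖^q) * ((2:ℝ)^(p+q)/8)^n := by
            rw [hnorm, hnorm, Real.mul_rpow (by positivity) (norm_nonneg a),
              Real.mul_rpow (by positivity) (norm_nonneg b), aux_pow_rpow, aux_pow_rpow,
              div_pow, Real.rpow_add (by norm_num : (0:ℝ) < 2), mul_pow]
            field_simp
            have h8 : ((1:ℝ)/8)^n * (8:ℝ)^n = 1 := by rw [← mul_pow]; norm_num
            linear_combination (δ * ‖a‖^p * ‖b‖^q) * h8
    have hlim := tendsto_nhds_unique hT hZ
    rw [hfg ((2:ℂ) • a + b), hfg ((2:ℂ) • a - b), hfg (a+b), hfg (a-b), hfg a]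
    rw [← sub_eq_zero]
    calc g ((2:ℂ) • a + b) + g ((2:ℂ) • a - b)
          - ((2:ℂ) • g (a + b) + (2:ℂ) • g (a - b) + (12:ℂ) • g a)
        = g ((2:ℂ) • a + b) + g ((2:ℂ) • a - b) - (2:ℂ) • g (a + b)
          - (2:ℂ) • g (a - b) - (12:ℂ) • g a := by module
      _ = 0 := hlim
  · -- derivation equation
    intro a b
    have h2 := key2 a b
    rw [← hfg (a*b), ← hfg b] at h2
    exact h2
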